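/- Let c* ∈ ℝ be such that the minimum of x ↦ d·x over X^ε is attained and equals c* (i.e., there exists x₀ ∈ X^ε with d·x₀ = c*, and d·x ≥ c* for all x ∈ X^ε). Assume moreover that for every c < c* there exists x ∈ X with d·x = c. Say that c ∈ ℝ is a non-implied necessary condition parameter if φ_d^c is a necessary condition for ε-optimality and for every c' ≠ c such that φ_d^{c'} is a necessary condition for ε-optimality, the truth set {x ∈ X | d·x ≥ c'} is not contained in the truth set {x ∈ X | d·x ≥ c}. Then the set of non-implied necessary condition parameters is exactly {c*}. -/
import Mathlib


open Matrix

/-- Under attainment of the minimum `c*` of `x ↦ d·x` over `X^ε`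
and realisability of every `c < c*` over `X`, the set of "non-implied necessary
condition parameters" (parameters `c` such that `φ_d^c` is a necessary condition
for ε-optimality and no other necessary condition `φ_d^{c'}`, `c' ≠ c`, has its
truth set contained in that of `φ_d^c`) is exactly `{c*}`. -/
theorem stmt5 {n : ℕ} (X : Set (Fin n → ℝ)) (f : (Fin n → ℝ) → ℝ)
    (xstar : Fin n → ℝ) (hxstar : xstar ∈ X)
    (hopt : ∀ x ∈ X, f xstar ≤ f x) (hf0 : 0 ≤ f xstar)
    (ε : ℝ) (hε : 0 ≤ ε)
    (d : Fin n → ℝ) (hd : ∀ i, d i = 0 ∨ d i = 1)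
    (Xeps : Set (Fin n → ℝ))
    (hXeps : Xeps = {x ∈ X | f x ≤ (1 + ε) * f xstar})
    (cstar : ℝ)
    (hattained : ∃ x₀ ∈ Xeps, d ⬝ᵥ x₀ = cstar)
    (hlb : ∀ x ∈ Xeps, cstar ≤ d ⬝ᵥ x)
    (hdense : ∀ c : ℝ, c < cstar → ∃ x ∈ X, d ⬝ᵥ x = c) :
    {c : ℝ | (∀ x ∈ Xeps, c ≤ d ⬝ᵥ x) ∧
      ∀ c' : ℝ, c' ≠ c → (∀ x ∈ Xeps, c' ≤ d ⬝ᵥ x) →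
        ¬ ({x ∈ X | c' ≤ d ⬝ᵥ x} ⊆ {x ∈ X | c ≤ d ⬝ᵥ x})} = {cstar} := by
  obtain ⟨x₀, hx₀, hdx₀⟩ := hattained
  ext c
  simp only [Set.mem_setOf_eq, Set.mem_singleton_iff]
  constructor
  · rintro ⟨hnec, hni⟩
    by_contra hne
    have hc : c ≤ cstar := hdx₀ ▸ hnec x₀ hx₀
    have hclt : c < cstar := lt_of_le_of_ne hc hne
    exact hni cstar (Ne.symm hne) hlb (fun x hx => ⟨hx.1, le_trans hc hx.2⟩)
  · rintro rfl
    refine ⟨hlb, fun c' hne hnec hsub => ?_⟩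
    have hc' : c' ≤ c := hdx₀ ▸ hnec x₀ hx₀
    have hlt : c' < c := lt_of_le_of_ne hc' hne
    obtain ⟨x, hxX, hdx⟩ := hdense c' hlt
    exact absurd (hsub ⟨hxX, hdx.ge⟩).2 (by rw [hdx]; exact not_le.2 hlt)
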